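/- If an edge update (a,b) (insertion or deletion) satisfies d_G(r,a) = d_G(r,b) for a landmark r, then no vertex is affected with respect to r by that single update; that is, for every vertex v, P_G(r,v) = P_{G'}(r,v), where G' is G with the single edge (a,b) inserted or deleted. -/

import Mathlib

open scoped Classical

variable {V : Type*}

namespace BatchHL

/-- `l` is a walk in `G` from `r` to `v`, given as its (nonempty) list of visited vertices. -/
def IsWalk (G : SimpleGraph V) (r v : V) (l : List V) : Prop :=
  l ≠ [] ∧ l.head? = some r ∧ l.getLast? = some v ∧ l.Chain' G.Adj

/-- The length (number of edges) of a walk given as a list of vertices. -/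
def len (l : List V) : ℕ := l.length - 1

/-- The walk `l` passes through the (undirected) edge `(a, b)`. -/
def Passes (l : List V) (a b : V) : Prop :=
  (a, b) ∈ l.zip l.tail ∨ (b, a) ∈ l.zip l.tail

/-- `P_G(r,v)`: the set of all shortest paths between `r` and `v` in `G`. -/
def SPaths (G : SimpleGraph V) (r v : V) : Set (List V) :=
  {l | IsWalk G r v l ∧ ∀ l', IsWalk G r v l' → l.length ≤ l'.length}

/-- `(a,b)` is an edge deleted by the batch update turning `G` into `G'`. -/
def DeletedEdge (G G' : SimpleGraph V) (a b : V) : Prop := G.Adj a b ∧ ¬ G'.Adj a b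

/-- `(a,b)` is an edge inserted by the batch update turning `G` into `G'`. -/
def InsertedEdge (G G' : SimpleGraph V) (a b : V) : Prop := G'.Adj a b ∧ ¬ G.Adj a b

/-- `(a,b)` is an edge of the batch update `B` turning `G` into `G'`. -/
def UpdatedEdge (G G' : SimpleGraph V) (a b : V) : Prop :=
  InsertedEdge G G' a b ∨ DeletedEdge G G' a b

/-- The walk `l` passes through a deleted edge. -/
def PassesDeleted (G G' : SimpleGraph V) (l : List V) : Prop :=
  ∃ a b, DeletedEdge G G' a b ∧ Passes l a b

/-- The walk `l` passes through an inserted edge. -/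
def PassesInserted (G G' : SimpleGraph V) (l : List V) : Prop :=
  ∃ a b, InsertedEdge G G' a b ∧ Passes l a b

/-- `v` is affected w.r.t. landmark `r` iff the set of shortest paths changes. -/
def Affected (G G' : SimpleGraph V) (r v : V) : Prop := SPaths G r v ≠ SPaths G' r v

/-- A composite path from `r` to `v`: a prefix lying in `G` followed by a suffix lying in `G'`. -/
def IsComposite (G G' : SimpleGraph V) (r v : V) (l : List V) : Prop :=
  ∃ w l₁ l₂, IsWalk G r w l₁ ∧ IsWalk G' w v l₂ ∧ l = l₁ ++ l₂.tail

/-- A significant composite path: a composite path whose `G`-prefix passes through a deleted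
edge and whose `G'`-suffix passes through an inserted edge. -/
def IsSigComposite (G G' : SimpleGraph V) (r v : V) (l : List V) : Prop :=
  ∃ w l₁ l₂, IsWalk G r w l₁ ∧ IsWalk G' w v l₂ ∧ l = l₁ ++ l₂.tail ∧
    PassesDeleted G G' l₁ ∧ PassesInserted G G' l₂

/-- `v` is composite-path affected w.r.t. `r`. -/
def CPAffected (G G' : SimpleGraph V) (r v : V) : Prop :=
  Affected G G' r v ∨ ∃ l, IsSigComposite G G' r v l ∧ (len l : ℕ∞) ≤ G.edist r v

/-- A distance labelling: each label entry `(r, δ) ∈ L v` satisfies `δ = d_G(r,v)`. -/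
def IsLabelling (G : SimpleGraph V) (L : V → Set (V × ℕ∞)) : Prop :=
  ∀ v r δ, (r, δ) ∈ L v → δ = G.edist r v

/-- A 2-hop cover labelling: a distance labelling such that every pair `s, t` has a common
hub `r` lying on a shortest path between `s` and `t`. -/
def Is2HopCover (G : SimpleGraph V) (L : V → Set (V × ℕ∞)) : Prop :=
  IsLabelling G L ∧ ∀ s t : V, ∃ r, (r, G.edist r s) ∈ L s ∧ (r, G.edist r t) ∈ L t ∧
    G.edist s r + G.edist r t = G.edist s t

/-- A highway cover labelling `Γ = (H, L)` over `G` with landmarks `R`.  The highway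
distances `δ_H(r,r_i)` are by definition the graph distances `d_G(r,r_i)`. -/
def IsHighwayCover (G : SimpleGraph V) (R : Set V) (L : V → Set (V × ℕ∞)) : Prop :=
  (∀ v r δ, (r, δ) ∈ L v → r ∈ R ∧ δ = G.edist r v) ∧
  ∀ v, v ∉ R → ∀ r ∈ R,
    G.edist r v = sInf {x | ∃ ri δ, (ri, δ) ∈ L v ∧ x = δ + G.edist r ri}

/-- The landmark length / landmark distance values: `⊤` for "no path", otherwise a pair of a
length and a landmark flag (a `Prop`). -/
abbrev LLen := WithTop (ℕ × Prop)

/-- Lexicographic order on landmark lengths, with flag ordering `True < False`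
(i.e. `x ≤ y` at equal length iff `y`'s flag implies `x`'s flag). -/
def llLe : LLen → LLen → Prop
  | _, none => True
  | none, some _ => False
  | some a, some b => a.1 < b.1 ∨ (a.1 = b.1 ∧ (b.2 → a.2))

/-- Strict lexicographic order on landmark lengths. -/
def llLt (x y : LLen) : Prop := llLe x y ∧ ¬ llLe y x

/-- The extension operator `⊕`: `(d,l) ⊕ w = (d+1, True)` if `w ∈ R∖{r}`, else `(d+1, l)`. -/
def oplus (R : Set V) (r : V) : LLen → V → LLen
  | none, _ => none
  | some a, w => some (a.1 + 1, (w ∈ R ∧ w ≠ r) ∨ a.2)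

/-- The landmark length `lml(l)` of a walk `l` starting at `r`: its length together with the
flag recording whether it passes through a landmark other than `r`. -/
def lmLen (R : Set V) (r : V) (l : List V) : LLen :=
  some (len l, ∃ w ∈ l, w ∈ R ∧ w ≠ r)

/-- The landmark distance `d^L_G(r,v)`: the lexicographically minimal landmark length of a
walk from `r` to `v` (with `True < False` on flags), `⊤` if there is none.  Explicitly, its
length component is the minimal walk length and its flag holds iff some walk of minimal
length passes through a landmark other than `r`. -/
noncomputable def lmDist (G : SimpleGraph V) (R : Set V) (r v : V) : LLen :=
  if ∃ l, IsWalk G r v l then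
    some (sInf {n | ∃ l, IsWalk G r v l ∧ len l = n},
      ∃ l, IsWalk G r v l ∧ len l = sInf {n | ∃ l', IsWalk G r v l' ∧ len l' = n} ∧
        ∃ w ∈ l, w ∈ R ∧ w ≠ r)
  else ⊤

/-- Order on extended landmark lengths `(landmark length, deletion flag)`, lexicographic with
`True < False` on the deletion flag. -/
def ellLe (x y : LLen × Prop) : Prop := llLt x.1 y.1 ∨ (x.1 = y.1 ∧ (y.2 → x.2))

/-- Strict order on extended landmark lengths. -/
def ellLt (x y : LLen × Prop) : Prop := ellLe x y ∧ ¬ ellLe y x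

/-- `β(r,v) = (d^L_G(r,v), True)`. -/
noncomputable def beta (G : SimpleGraph V) (R : Set V) (r v : V) : LLen × Prop :=
  (lmDist G R r v, True)

/-- The distance bound `d_bou(u, S)` of `u` w.r.t. `S` in `G'`. -/
noncomputable def dbou (G' : SimpleGraph V) (r : V) (S : Set V) (u : V) : ℕ∞ :=
  ⨅ (w : V) (_ : G'.Adj u w ∧ w ∉ S), (G'.edist r w + 1)

/-- The set `{ d^L_{G'}(r,w) ⊕ v | w ∈ N_{G'}(v) ∖ S }`, whose lexicographic minimum is the
landmark distance bound `d^L_bou(v,S)`. -/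
noncomputable def lmBouSet (G' : SimpleGraph V) (R : Set V) (r v : V) (S : Set V) :
    Set LLen :=
  {x | ∃ w, G'.Adj v w ∧ w ∉ S ∧ x = oplus R r (lmDist G' R r w) v}

/-- The subgraph `G[V ∖ R]` obtained by removing all landmarks (landmarks become isolated). -/
def removeLandmarks (G : SimpleGraph V) (R : Set V) : SimpleGraph V where
  Adj u w := G.Adj u w ∧ u ∉ R ∧ w ∉ R
  symm := ⟨fun u w ⟨h, hu, hw⟩ => ⟨h.symm, hw, hu⟩⟩
  loopless := ⟨fun u ⟨h, _, _⟩ => G.irrefl h⟩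

section TrivialUpdateAux

open SimpleGraph

private lemma exists_walk_of_chain' {G : SimpleGraph V} :
    ∀ (l : List V) (x y : V), l.head? = some x → l.getLast? = some y →
      l.Chain' G.Adj → ∃ p : G.Walk x y, p.support = l
  | [], x, y, hh, _, _ => by simp at hh
  | [c], x, y, hh, hl, _ => by
      simp only [List.head?_cons, Option.some.injEq] at hh
      simp only [List.getLast?_singleton, Option.some.injEq] at hl
      subst hh; subst hl
      exact ⟨SimpleGraph.Walk.nil, rfl⟩
  | c :: d :: t, x, y, hh, hl, hc => by
      simp only [List.head?_cons, Option.some.injEq] at hh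
      subst hh
      rw [List.getLast?_cons_cons] at hl
      replace hc := List.isChain_cons_cons.mp hc
      obtain ⟨q, hq⟩ := exists_walk_of_chain' (d :: t) d y rfl hl hc.2
      exact ⟨SimpleGraph.Walk.cons hc.1 q, by simp [hq]⟩

private lemma isWalk_iff {G : SimpleGraph V} {r v : V} {l : List V} :
    IsWalk G r v l ↔ ∃ p : G.Walk r v, p.support = l := by
  constructor
  · rintro ⟨hne, hh, hl, hc⟩
    exact exists_walk_of_chain' l r v hh hl hc
  · rintro ⟨p, rfl⟩
    refine ⟨p.support_ne_nil, ?_, ?_, p.isChain_adj_support⟩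
    · rw [p.support_eq_cons]; rfl
    · rw [List.getLast?_eq_getLast p.support_ne_nil, p.getLast_support]

variable {G G' : SimpleGraph V} {r a b : V}

private lemma edist_eq_of_mem_pair (heq : G.edist r a = G.edist r b)
    {x y : V} (hx : x ∈ ({a, b} : Set V)) (hy : y ∈ ({a, b} : Set V)) :
    G.edist r x = G.edist r y := by
  rcases hx with rfl | rfl <;> rcases hy with rfl | rfl <;> simp [heq]

private lemma edist_le_length
    (hupd : ∀ u w, (G'.Adj u w ↔ G.Adj u w) ∨ ({u, w} : Set V) = {a, b})
    (heq : G.edist r a = G.edist r b) :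
    ∀ {v w : V} (p : G'.Walk v w), r = w → G.edist r v ≤ p.length := by
  intro v w p
  induction p with
  | nil => rintro rfl; simp
  | @cons x y _ h q ih =>
    rintro rfl
    have ih := ih rfl
    rw [SimpleGraph.Walk.length_cons]
    push_cast
    rcases hupd x y with hiff | hset
    · have hadj : G.Adj x y := hiff.mp h
      calc G.edist r x ≤ G.edist r y + G.edist y x := SimpleGraph.edist_triangle
        _ ≤ (q.length : ℕ∞) + 1 := by
            have h1 : G.edist y x = 1 := SimpleGraph.edist_eq_one_iff_adj.mpr hadj.symm
            rw [h1]; exact add_le_add_left ih 1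
    · have hx : x ∈ ({a, b} : Set V) := hset ▸ (by simp : x ∈ ({x, y} : Set V))
      have hy : y ∈ ({a, b} : Set V) := hset ▸ (by simp : y ∈ ({x, y} : Set V))
      calc G.edist r x = G.edist r y := edist_eq_of_mem_pair heq hx hy
        _ ≤ (q.length : ℕ∞) := ih
        _ ≤ (q.length : ℕ∞) + 1 := le_self_add

private lemma exists_walk_update
    (hupd : ∀ u w, (G'.Adj u w ↔ G.Adj u w) ∨ ({u, w} : Set V) = {a, b})
    (heq : G.edist r a = G.edist r b) :
    ∀ {v w : V} (p : G.Walk v w), r = w → ((p.length : ℕ∞) = G.edist r v →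
      ∃ p' : G'.Walk v w, p'.support = p.support) := by
  intro v w p
  induction p with
  | nil => exact fun _ _ => ⟨SimpleGraph.Walk.nil, rfl⟩
  | @cons x y _ h q ih =>
    rintro rfl
    have ih := ih rfl
    intro hlen
    rw [SimpleGraph.Walk.length_cons] at hlen
    have hqle : G.edist r y ≤ (q.length : ℕ∞) := by
      rw [SimpleGraph.edist_comm]; exact q.edist_le
    obtain ⟨n, hn⟩ := WithTop.ne_top_iff_exists.mp
      (hqle.trans_lt (WithTop.coe_lt_top _)).ne
    have hn' : G.edist r y = (n : ℕ∞) := hn.symm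
    have hvle : G.edist r x ≤ G.edist r y + 1 := by
      calc G.edist r x ≤ G.edist r y + G.edist y x := SimpleGraph.edist_triangle
        _ ≤ G.edist r y + 1 := by
            rw [SimpleGraph.edist_eq_one_iff_adj.mpr h.symm]
    have hnq : n ≤ q.length := by
      rw [hn'] at hqle; exact_mod_cast hqle
    have hqn : q.length ≤ n := by
      have : ((q.length + 1 : ℕ) : ℕ∞) ≤ (n : ℕ∞) + 1 := by
        rw [hlen]; rw [hn'] at hvle; exact_mod_cast hvle
      have h2 : q.length + 1 ≤ n + 1 := by exact_mod_cast this
      omega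
    have hql : (q.length : ℕ∞) = G.edist r y := by
      rw [hn', le_antisymm hqn hnq]
    obtain ⟨q', hq'⟩ := ih hql
    have hadj : G'.Adj x y := by
      rcases hupd x y with hiff | hset
      · exact hiff.mpr h
      · exfalso
        have hx : x ∈ ({a, b} : Set V) := hset ▸ (by simp : x ∈ ({x, y} : Set V))
        have hy : y ∈ ({a, b} : Set V) := hset ▸ (by simp : y ∈ ({x, y} : Set V))
        have hxy : G.edist r x = G.edist r y := edist_eq_of_mem_pair heq hx hy
        have hcast : ((q.length + 1 : ℕ) : ℕ∞) = (q.length : ℕ∞) := by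
          rw [hlen, hxy, ← hql]
        have := (by exact_mod_cast hcast : q.length + 1 = q.length)
        omega
    exact ⟨SimpleGraph.Walk.cons hadj q', by simp [hq']⟩

private lemma edist_update_eq
    (hupd : ∀ u w, (G'.Adj u w ↔ G.Adj u w) ∨ ({u, w} : Set V) = {a, b})
    (heq : G.edist r a = G.edist r b) :
    ∀ v, G.edist r v = G'.edist r v := by
  intro v
  apply le_antisymm
  · by_cases hne : G'.edist r v = ⊤
    · rw [hne]; exact le_top
    · obtain ⟨p, hp⟩ := SimpleGraph.exists_walk_of_edist_ne_top hne
      calc G.edist r v ≤ (p.reverse.length : ℕ∞) := edist_le_length hupd heq p.reverse rfl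
        _ = (p.length : ℕ∞) := by rw [SimpleGraph.Walk.length_reverse]
        _ = G'.edist r v := hp
  · by_cases hne : G.edist r v = ⊤
    · rw [hne]; exact le_top
    · obtain ⟨p, hp⟩ := SimpleGraph.exists_walk_of_edist_ne_top hne
      obtain ⟨p', hp'⟩ := exists_walk_update hupd heq p.reverse rfl
        (by rw [SimpleGraph.Walk.length_reverse]; exact hp)
      have hlen : p'.length = p.length := by
        have := congrArg List.length hp'
        rw [SimpleGraph.Walk.length_support, SimpleGraph.Walk.length_support,
          SimpleGraph.Walk.length_reverse] at this
        omega
      calc G'.edist r v = G'.edist v r := SimpleGraph.edist_comm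
        _ ≤ (p'.length : ℕ∞) := p'.edist_le
        _ = (p.length : ℕ∞) := by rw [hlen]
        _ = G.edist r v := hp

private lemma sPaths_subset
    (hupd : ∀ u w, (G'.Adj u w ↔ G.Adj u w) ∨ ({u, w} : Set V) = {a, b})
    (heq : G.edist r a = G.edist r b)
    (hed : ∀ v, G.edist r v = G'.edist r v) (v : V) :
    SPaths G r v ⊆ SPaths G' r v := by
  rintro l ⟨hw, hmin⟩
  obtain ⟨p, rfl⟩ := isWalk_iff.mp hw
  have hne : G.edist r v ≠ ⊤ := (p.edist_le.trans_lt (WithTop.coe_lt_top _)).ne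
  obtain ⟨q, hq⟩ := SimpleGraph.exists_walk_of_edist_ne_top hne
  have hmin' : p.length ≤ q.length := by
    have := hmin q.support (isWalk_iff.mpr ⟨q, rfl⟩)
    rw [SimpleGraph.Walk.length_support, SimpleGraph.Walk.length_support] at this
    omega
  have hplen : (p.length : ℕ∞) = G.edist r v := by
    refine le_antisymm ?_ p.edist_le
    rw [← hq]; exact_mod_cast hmin'
  obtain ⟨p', hp'⟩ := exists_walk_update hupd heq p.reverse rfl
    (by rw [SimpleGraph.Walk.length_reverse]; exact hplen)
  refine ⟨isWalk_iff.mpr ⟨p'.reverse, ?_⟩, ?_⟩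
  · rw [SimpleGraph.Walk.support_reverse, hp', SimpleGraph.Walk.support_reverse,
      List.reverse_reverse]
  · intro l' hl'
    obtain ⟨q', rfl⟩ := isWalk_iff.mp hl'
    have : (p.length : ℕ∞) ≤ (q'.length : ℕ∞) := by
      rw [hplen, hed]; exact q'.edist_le
    rw [SimpleGraph.Walk.length_support, SimpleGraph.Walk.length_support]
    have := (by exact_mod_cast this : p.length ≤ q'.length)
    omega

end TrivialUpdateAux

/-- If a single edge update `(a,b)` (insertion or deletion) satisfies
`d_G(r,a) = d_G(r,b)`, then no vertex is affected w.r.t. `r`: `P_G(r,v) = P_{G'}(r,v)` for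
every `v`.  Here `G'` differs from `G` at most on the single edge `{a,b}`. -/
theorem trivial_update (G G' : SimpleGraph V) (r a b : V)
    (hupd : ∀ u w, (G'.Adj u w ↔ G.Adj u w) ∨ ({u, w} : Set V) = {a, b})
    (heq : G.edist r a = G.edist r b) :
    ∀ v, SPaths G r v = SPaths G' r v := by
  intro v
  have hupd' : ∀ u w, (G.Adj u w ↔ G'.Adj u w) ∨ ({u, w} : Set V) = {a, b} :=
    fun u w => (hupd u w).imp Iff.symm id
  have hed := edist_update_eq hupd heq
  have heq' : G'.edist r a = G'.edist r b := by rw [← hed, ← hed]; exact heq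
  have hed' : ∀ v, G'.edist r v = G.edist r v := fun v => (hed v).symm
  exact Set.Subset.antisymm (sPaths_subset hupd heq hed v) (sPaths_subset hupd' heq' hed' v)

end BatchHL
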